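/- Let P_{p^m} denote a Sylow p-subgroup of the symmetric group on p^m letters, and let n have p-adic expansion n = a_0 + a_1 p + ⋯ + a_k p^k with 0 ≤ a_i < p and a_k > 0. Then a Sylow p-subgroup P of Sym_n, which is isomorphic to the direct product of a_i copies of P_{p^i} for i = 0, …, k, has derived length exactly k. -/

import Mathlib

/-- The derived length of a group: the least `n` with `derivedSeries G n = ⊥`. -/
noncomputable def derivedLength (G : Type*) [Group G] : ℕ :=
  sInf {n | derivedSeries G n = ⊥}

open Equiv Function Subgroup
open scoped commutatorElement

namespace Stmt5Aux

variable {G : Type*} [Group G] {G' : Type*} [Group G']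

/-- Iterated commutator of a subgroup inside the ambient group. -/
def itC (H : Subgroup G) : ℕ → Subgroup G
  | 0 => H
  | j + 1 => ⁅itC H j, itC H j⁆

lemma itC_mono {H K : Subgroup G} (h : H ≤ K) : ∀ j, itC H j ≤ itC K j
  | 0 => h
  | j + 1 => Subgroup.commutator_mono (itC_mono h j) (itC_mono h j)

lemma derivedSeries_eq_itC_top (j : ℕ) : derivedSeries G j = itC (⊤ : Subgroup G) j := by
  induction j with
  | zero => rfl
  | succ j ih => rw [derivedSeries_succ, ih]; rfl

lemma derivedSeries_add (m j : ℕ) :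
    derivedSeries G (m + j) = itC (derivedSeries G m) j := by
  induction j with
  | zero => rfl
  | succ j ih => rw [show m + (j+1) = (m+j)+1 from rfl, derivedSeries_succ, ih]; rfl

lemma map_itC (f : G →* G') (H : Subgroup G) (j : ℕ) :
    (itC H j).map f = itC (H.map f) j := by
  induction j with
  | zero => rfl
  | succ j ih => rw [itC, Subgroup.map_commutator, ih]; rfl

lemma itC_eq_map_derivedSeries (H : Subgroup G) (j : ℕ) :
    itC H j = (derivedSeries H j).map H.subtype := by
  rw [derivedSeries_eq_itC_top, map_itC, ← MonoidHom.range_eq_map, Subgroup.range_subtype]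

lemma ds_bot_of_injective (f : G →* G') (hf : Injective f) {j : ℕ}
    (h : derivedSeries G' j = ⊥) : derivedSeries G j = ⊥ := by
  have h2 := map_derivedSeries_le_derivedSeries f j
  rw [h, le_bot_iff, Subgroup.map_eq_bot_iff, f.ker_eq_bot_iff.mpr hf, le_bot_iff] at h2
  exact h2

lemma ds_bot_of_surjective (f : G →* G') (hf : Surjective f) {j : ℕ}
    (h : derivedSeries G j = ⊥) : derivedSeries G' j = ⊥ := by
  rw [← map_derivedSeries_eq hf j, h, Subgroup.map_bot]

lemma ds_bot_congr (e : G ≃* G') (j : ℕ) :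
    (derivedSeries G j = ⊥) ↔ (derivedSeries G' j = ⊥) :=
  ⟨ds_bot_of_surjective e.toMonoidHom e.surjective,
   ds_bot_of_injective e.toMonoidHom e.injective⟩

lemma ds_bot_step_of_le {W : Type*} [Group W] (B : Subgroup W)
    (h1 : derivedSeries W 1 ≤ B) {j : ℕ} (hB : derivedSeries B j = ⊥) :
    derivedSeries W (1 + j) = ⊥ := by
  rw [derivedSeries_add]
  have h3 : itC B j = ⊥ := by rw [itC_eq_map_derivedSeries, hB, Subgroup.map_bot]
  exact le_bot_iff.mp (h3 ▸ itC_mono h1 j)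

lemma ds_bot_descend {W B Q : Type*} [Group W] [Group B] [Group Q]
    (ι : B →* W) (hι : Injective ι) (H' : Subgroup B)
    (hH : H'.map ι ≤ derivedSeries W 1) (π : B →* Q)
    (hπ : ∀ q : Q, ∃ b ∈ H', π b = q) {j : ℕ}
    (h : derivedSeries W (1 + j) = ⊥) : derivedSeries Q j = ⊥ := by
  have h1 : itC (H'.map ι) j = ⊥ :=
    le_bot_iff.mp (by rw [← h, derivedSeries_add]; exact itC_mono hH j)
  rw [← map_itC] at h1
  have h2 : itC H' j = ⊥ := by
    rwa [Subgroup.map_eq_bot_iff, (MonoidHom.ker_eq_bot_iff ι).mpr hι, le_bot_iff] at h1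
  rw [itC_eq_map_derivedSeries, Subgroup.map_eq_bot_iff, Subgroup.ker_subtype, le_bot_iff] at h2
  refine ds_bot_of_surjective (π.comp H'.subtype) (fun q => ?_) h2
  obtain ⟨b, hb, hbq⟩ := hπ q
  exact ⟨⟨b, hb⟩, hbq⟩

lemma ds_pi_bot {ι : Type*} (H : ι → Type*) [∀ i, Group (H i)] (j : ℕ) :
    derivedSeries (∀ i, H i) j = ⊥ ↔ ∀ i, derivedSeries (H i) j = ⊥ := by
  classical
  constructor
  · intro h i
    refine ds_bot_of_surjective (Pi.evalMonoidHom H i) (fun q => ?_) h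
    exact ⟨Function.update 1 i q, by simp⟩
  · intro h
    rw [eq_bot_iff]
    intro x hx
    have hx1 : ∀ i, x i = 1 := by
      intro i
      have h3 := map_derivedSeries_le_derivedSeries (Pi.evalMonoidHom H i) j
      rw [h i, le_bot_iff, Subgroup.map_eq_bot_iff] at h3
      simpa using h3 hx
    exact funext hx1


/-! ### The wreath product `C_p ≀ Q` (base `ZMod p → Q`, top `C_p`). -/

variable (p : ℕ)

/-- Shift automorphism of `ZMod p → Q`. -/
def shiftAut (Q : Type*) [Group Q] (c : ZMod p) : MulAut (ZMod p → Q) where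
  toFun f := fun i => f (i - c)
  invFun f := fun i => f (i + c)
  left_inv f := by funext i; simp
  right_inv f := by funext i; simp
  map_mul' f g := rfl

lemma shiftAut_apply (Q : Type*) [Group Q] (c : ZMod p) (f : ZMod p → Q) (i : ZMod p) :
    shiftAut p Q c f i = f (i - c) := rfl

/-- The action of `Multiplicative (ZMod p)` on `ZMod p → Q` by shifting. -/
def wphi (Q : Type*) [Group Q] : Multiplicative (ZMod p) →* MulAut (ZMod p → Q) where
  toFun c := shiftAut p Q c.toAdd
  map_one' := by
    refine MulEquiv.ext fun f => funext fun i => ?_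
    simp [shiftAut]
  map_mul' c d := by
    refine MulEquiv.ext fun f => funext fun i => ?_
    simp [shiftAut, sub_sub]

/-- The wreath product `C_p ≀ Q`. -/
abbrev Wre (Q : Type*) [Group Q] : Type _ :=
  (ZMod p → Q) ⋊[wphi p Q] Multiplicative (ZMod p)

/-- The underlying set of the wreath product. -/
def wreEquivProd (Q : Type*) [Group Q] : Wre p Q ≃ (ZMod p → Q) × Multiplicative (ZMod p) where
  toFun x := (x.left, x.right)
  invFun x := ⟨x.1, x.2⟩
  left_inv x := rfl
  right_inv x := rfl

lemma card_Wre (Q : Type*) [Group Q] [NeZero p] :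
    Nat.card (Wre p Q) = Nat.card Q ^ p * p := by
  rw [Nat.card_congr (wreEquivProd p Q), Nat.card_prod, Nat.card_fun, Nat.card_zmod,
    Nat.card_congr (Multiplicative.toAdd (α := ZMod p)), Nat.card_zmod]

/-- A group nontrivial as soon as `p` is. -/
instance [Fact (1 < p)] (Q : Type*) [Group Q] : Nontrivial (Wre p Q) :=
  SemidirectProduct.inr_injective.nontrivial

section PermRep

variable {β Q : Type*} [Group Q]

/-- The "shear" permutation of `ι × β` attached to `f : ι → Q`. -/
def shearPerm {ι : Type*} (ρ : Q →* Equiv.Perm β) (f : ι → Q) : Equiv.Perm (ι × β) where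
  toFun x := (x.1, ρ (f x.1) x.2)
  invFun x := (x.1, (ρ (f x.1))⁻¹ x.2)
  left_inv := by rintro ⟨a, b⟩; simp
  right_inv := by rintro ⟨a, b⟩; simp

/-- `piPermHom` as a monoid hom. -/
def piPermHom {ι : Type*} (ρ : Q →* Equiv.Perm β) : (ι → Q) →* Equiv.Perm (ι × β) where
  toFun := shearPerm ρ
  map_one' := by
    refine Equiv.ext fun x => ?_
    simp [shearPerm]
  map_mul' f g := by
    refine Equiv.ext fun x => ?_
    simp [shearPerm]

lemma piPermHom_injective {ι : Type*} [Nonempty β] {ρ : Q →* Equiv.Perm β}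
    (hρ : Injective ρ) : Injective (piPermHom (ι := ι) ρ) := by
  intro f g h
  funext a
  refine hρ (Equiv.ext fun b => ?_)
  have := congrArg (fun (σ : Equiv.Perm (ι × β)) => σ (a, b)) h
  simpa [piPermHom, shearPerm] using this

/-- The permutation action of the top `C_p` on `ZMod p × β`. -/
def topPermHom (β : Type*) : Multiplicative (ZMod p) →* Equiv.Perm (ZMod p × β) where
  toFun c := (Equiv.addRight c.toAdd).prodCongr (Equiv.refl β)
  map_one' := by
    refine Equiv.ext fun x => ?_
    simp
  map_mul' c d := by
    refine Equiv.ext fun x => ?_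
    obtain ⟨a, b⟩ := x
    simp only [Equiv.prodCongr_apply, Equiv.coe_refl, Prod.map, Equiv.coe_addRight,
      Equiv.Perm.mul_apply, toAdd_mul, id_eq]
    exact congrArg (fun z => (z, b)) (by abel)

/-- The permutation representation of the wreath product. -/
def wrePermHom (ρ : Q →* Equiv.Perm β) : Wre p Q →* Equiv.Perm (ZMod p × β) :=
  SemidirectProduct.lift (piPermHom ρ) (topPermHom p β) (by
    intro c
    refine MonoidHom.ext fun f => Equiv.ext fun x => ?_
    obtain ⟨a, b⟩ := x
    simp [piPermHom, shearPerm, topPermHom, wphi, shiftAut, mul_assoc,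
      Equiv.Perm.inv_def, Equiv.prodCongr_symm, Equiv.prodCongr_apply, Prod.map,
      sub_eq_add_neg])

lemma wrePermHom_injective [Nonempty β] {ρ : Q →* Equiv.Perm β} (hρ : Injective ρ) :
    Injective (wrePermHom p ρ) := by
  refine (injective_iff_map_eq_one _).mpr fun x hx => ?_
  obtain ⟨f, c⟩ := x
  have hval : ∀ (d : ZMod p) (b : β),
      (d + c.toAdd, ρ (f (d + c.toAdd)) b) = (d, b) := by
    intro d b
    have h1 : wrePermHom p ρ ⟨f, c⟩ (d, b) = (d, b) := by rw [hx]; rfl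
    simpa [wrePermHom, SemidirectProduct.lift, piPermHom, shearPerm, topPermHom] using h1
  obtain ⟨b0⟩ := ‹Nonempty β›
  have hc : c = 1 := by
    have := (hval 0 b0)
    have h2 : (0 : ZMod p) + c.toAdd = 0 := congrArg Prod.fst this
    simpa using h2
  subst hc
  have hf : f = 1 := by
    funext d
    refine hρ (Equiv.ext fun b => ?_)
    have := congrArg Prod.snd (hval d b)
    simpa using this
  rw [hf]
  rfl

end PermRep


/-! ### Derived series of the wreath product -/

section DS

variable (Q : Type*) [Group Q]

/-- The function supported at `0`. -/
def ffun (q : Q) : ZMod p → Q := fun i => if i = 0 then q else 1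

lemma inl_hfun_comm (q : Q) :
    (SemidirectProduct.inl (φ := wphi p Q)
        (ffun p Q q * wphi p Q (Multiplicative.ofAdd (1 : ZMod p)) (ffun p Q q)⁻¹)) =
      ⁅(SemidirectProduct.inl (ffun p Q q) : Wre p Q),
        (SemidirectProduct.inr (Multiplicative.ofAdd (1 : ZMod p)) : Wre p Q)⁆ := by
  rw [commutatorElement_def, map_mul, ← map_inv, mul_assoc, mul_assoc]
  congr 1
  rw [SemidirectProduct.inl_aut, mul_assoc, map_inv, map_inv]

lemma hfun_zero [Fact (1 < p)] (q : Q) :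
    (ffun p Q q * wphi p Q (Multiplicative.ofAdd (1 : ZMod p)) (ffun p Q q)⁻¹) 0 = q := by
  have h1 : (-1 : ZMod p) ≠ 0 := by
    haveI : Nontrivial (ZMod p) := ZMod.nontrivial p
    exact neg_ne_zero.mpr one_ne_zero
  simp [wphi, shiftAut, ffun, Pi.mul_apply, h1, zero_sub]

theorem ds_Wre_iff [Fact p.Prime] (k : ℕ)
    (hQ : ∀ j, derivedSeries Q j = ⊥ ↔ k ≤ j) (j : ℕ) :
    derivedSeries (Wre p Q) j = ⊥ ↔ k + 1 ≤ j := by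
  haveI : Fact (1 < p) := ⟨Fact.out (p := p.Prime) |>.one_lt⟩
  constructor
  · intro h
    by_contra hlt
    push_neg at hlt
    match j, hlt with
    | 0, _ =>
      rw [derivedSeries_zero] at h
      obtain ⟨x, hx⟩ := exists_ne (1 : Wre p Q)
      exact hx (by rw [← Subgroup.mem_bot, ← h]; trivial)
    | (j' + 1), hlt =>
      have hj' : ¬ (k ≤ j') := by omega
      rw [← hQ j'] at hj'
      refine hj' ?_
      rw [show j' + 1 = 1 + j' from by omega] at h
      refine ds_bot_descend (Q := Q) (SemidirectProduct.inl (φ := wphi p Q))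
        SemidirectProduct.inl_injective
        (Subgroup.closure (Set.range fun q : Q =>
          ffun p Q q * wphi p Q (Multiplicative.ofAdd (1 : ZMod p)) (ffun p Q q)⁻¹))
        ?_ (Pi.evalMonoidHom (fun _ : ZMod p => Q) 0) ?_ h
      · rw [MonoidHom.map_closure, Subgroup.closure_le]
        rintro _ ⟨_, ⟨q, rfl⟩, rfl⟩
        rw [SetLike.mem_coe, derivedSeries_succ, derivedSeries_zero]
        rw [inl_hfun_comm]
        exact Subgroup.commutator_mem_commutator (Subgroup.mem_top _) (Subgroup.mem_top _)
      · intro q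
        refine ⟨ffun p Q q * wphi p Q (Multiplicative.ofAdd (1 : ZMod p)) (ffun p Q q)⁻¹,
          Subgroup.subset_closure ⟨q, rfl⟩, ?_⟩
        exact hfun_zero p Q q
  · intro hj
    obtain ⟨m, rfl⟩ := Nat.exists_eq_add_of_le hj
    rw [show k + 1 + m = 1 + (k + m) from by omega]
    refine ds_bot_step_of_le (SemidirectProduct.inl (φ := wphi p Q)).range ?_ ?_
    · rw [derivedSeries_succ, derivedSeries_zero,
        SemidirectProduct.range_inl_eq_ker_rightHom, Subgroup.commutator_le]
      intro g _ h _
      rw [MonoidHom.mem_ker, map_commutatorElement]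
      exact commutatorElement_eq_one_iff_mul_comm.mpr (mul_comm _ _)
    · have e := MonoidHom.ofInjective
        (f := SemidirectProduct.inl (φ := wphi p Q)) SemidirectProduct.inl_injective
      have hbase : derivedSeries (ZMod p → Q) (k + m) = ⊥ :=
        (ds_pi_bot _ _).mpr fun _ => (hQ _).mpr (Nat.le_add_right _ _)
      exact ds_bot_of_surjective e.toMonoidHom e.surjective hbase

end DS


/-! ### The iterated wreath product tower -/

/-- The tower of iterated wreath products, as bundled groups. -/
def WT (p : ℕ) : ℕ → GrpCat
  | 0 => GrpCat.of PUnit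
  | k + 1 => GrpCat.of (Wre p (WT p k))

/-- Exponent of `p` in the order of `WT p k`. -/
def E (p : ℕ) : ℕ → ℕ
  | 0 => 0
  | k + 1 => p * E p k + 1

lemma E_mul (p : ℕ) (hp : 1 ≤ p) (k : ℕ) : (p - 1) * E p k = p ^ k - 1 := by
  induction k with
  | zero => simp [E]
  | succ k ih =>
    have h1 : 1 ≤ p ^ k := Nat.one_le_pow _ _ (by omega)
    have h2 : p ^ k ≤ p ^ (k + 1) := Nat.pow_le_pow_right (by omega) (by omega)
    zify [hp, h1, Nat.one_le_pow _ _ (show 0 < p by omega)] at ih ⊢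
    rw [E]
    push_cast
    linear_combination (p : ℤ) * ih

lemma card_WT (p : ℕ) [NeZero p] (k : ℕ) : Nat.card (WT p k) = p ^ E p k := by
  induction k with
  | zero =>
    show Nat.card PUnit = p ^ E p 0
    simp [E]
  | succ k ih =>
    show Nat.card (Wre p (WT p k)) = p ^ E p (k + 1)
    rw [card_Wre, ih, E, ← pow_mul, ← pow_succ, Nat.mul_comm p (E p k)]

lemma ds_WT (p : ℕ) [Fact p.Prime] (k j : ℕ) :
    derivedSeries (WT p k) j = ⊥ ↔ k ≤ j := by
  induction k generalizing j with
  | zero =>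
    constructor
    · intro _; exact Nat.zero_le j
    · intro _
      haveI : Subsingleton ↥(WT p 0) := inferInstanceAs (Subsingleton PUnit)
      rw [Subgroup.eq_bot_iff_forall]
      intro x _
      exact Subsingleton.elim x 1
  | succ k ih =>
    exact ds_Wre_iff p (WT p k) k ih j

/-- The faithful permutation representation of the tower. -/
noncomputable def permMulEquiv {α β : Type*} (e : α ≃ β) :
    Equiv.Perm α ≃* Equiv.Perm β :=
  { e.permCongr with
    map_mul' := fun σ τ => by
      refine Equiv.ext fun b => ?_
      simp [Equiv.permCongr_apply] }

/-- The representation of `WT p k` on `Fin k → ZMod p`. -/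
noncomputable def WRho (p : ℕ) : (k : ℕ) → (WT p k →* Equiv.Perm (Fin k → ZMod p))
  | 0 => 1
  | k + 1 =>
    (permMulEquiv (Fin.consEquiv (fun _ : Fin (k + 1) => ZMod p))).toMonoidHom.comp
      (wrePermHom p (WRho p k))

lemma WRho_injective (p : ℕ) (k : ℕ) : Injective (WRho p k) := by
  induction k with
  | zero =>
    haveI : Subsingleton ↥(WT p 0) := inferInstanceAs (Subsingleton PUnit)
    intro a b _
    exact Subsingleton.elim a b
  | succ k ih =>
    exact ((permMulEquiv _).injective).comp (wrePermHom_injective p ih)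


/-! ### The Sylow subgroup of `Sym n` as a product over `p`-adic digits -/

lemma sum_get_mul_pow (b : ℕ) (L : List ℕ) :
    ∑ i : Fin L.length, L.get i * b ^ (i : ℕ) = Nat.ofDigits b L := by
  induction L with
  | nil => simp [Nat.ofDigits]
  | cons d L ih =>
    rw [Nat.ofDigits_cons, ← ih,
      show (∑ i : Fin (d :: L).length, (d :: L).get i * b ^ (i : ℕ)) =
        ∑ i : Fin (L.length + 1), (d :: L).get i * b ^ (i : ℕ) from rfl,
      Fin.sum_univ_succ]
    simp only [Finset.mul_sum]
    congr 1
    · simp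
    · refine Finset.sum_congr rfl fun i _ => ?_
      simp [pow_succ]
      ring

lemma sum_get (L : List ℕ) : ∑ i : Fin L.length, L.get i = L.sum := by
  induction L with
  | nil => simp
  | cons d L ih =>
    rw [show (∑ i : Fin (d :: L).length, (d :: L).get i) =
        ∑ i : Fin (L.length + 1), (d :: L).get i from rfl, Fin.sum_univ_succ]
    simp [ih]

/-- The direct product of `a_i` copies of `WT p i` over the base-`p` digits of `n`. -/
abbrev SG (p n : ℕ) : Type :=
  ∀ i : Fin (p.digits n).length, Fin ((p.digits n).get i) → WT p (i : ℕ)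

lemma card_SG (p n : ℕ) [NeZero p] :
    Nat.card (SG p n) =
      p ^ ∑ i : Fin (p.digits n).length, (p.digits n).get i * E p (i : ℕ) := by
  rw [Nat.card_pi]
  have h1 : ∀ i : Fin (p.digits n).length,
      Nat.card (Fin ((p.digits n).get i) → WT p (i : ℕ)) =
        p ^ ((p.digits n).get i * E p (i : ℕ)) := by
    intro i
    rw [Nat.card_fun, card_WT, Nat.card_eq_fintype_card, Fintype.card_fin, ← pow_mul,
      Nat.mul_comm]
  rw [Finset.prod_congr rfl fun i _ => h1 i, Finset.prod_pow_eq_pow_sum]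

lemma exp_eq (p n : ℕ) [hp : Fact p.Prime] :
    ∑ i : Fin (p.digits n).length, (p.digits n).get i * E p (i : ℕ) =
      padicValNat p n.factorial := by
  have hp1 : 1 ≤ p := hp.out.one_le
  refine Nat.eq_of_mul_eq_mul_left (show 0 < p - 1 by have := hp.out.two_le; omega) ?_
  rw [sub_one_mul_padicValNat_factorial, Finset.mul_sum]
  have key : ∀ i : Fin (p.digits n).length,
      (p - 1) * ((p.digits n).get i * E p (i : ℕ)) =
        (p.digits n).get i * p ^ (i : ℕ) - (p.digits n).get i := by
    intro i
    rw [mul_left_comm, E_mul p hp1, Nat.mul_sub, Nat.mul_one]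
  rw [Finset.sum_congr rfl fun i _ => key i, Finset.sum_tsub_distrib, sum_get_mul_pow,
    Nat.ofDigits_digits, sum_get]
  intro i _
  calc (p.digits n).get i = (p.digits n).get i * 1 := (Nat.mul_one _).symm
    _ ≤ (p.digits n).get i * p ^ (i : ℕ) :=
      Nat.mul_le_mul_left _ (Nat.one_le_pow _ _ (by omega))

lemma ds_SG_iff (p n : ℕ) [hp : Fact p.Prime] (hn : n ≠ 0) (j : ℕ) :
    derivedSeries (SG p n) j = ⊥ ↔ Nat.log p n ≤ j := by
  have hlen : (p.digits n).length = Nat.log p n + 1 :=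
    Nat.digits_len p n hp.out.one_lt hn
  rw [ds_pi_bot]
  constructor
  · intro h
    have hi0 : Nat.log p n < (p.digits n).length := by omega
    have h2 := h ⟨Nat.log p n, hi0⟩
    rw [ds_pi_bot] at h2
    have hne : (p.digits n).get ⟨Nat.log p n, hi0⟩ ≠ 0 := by
      have hgl := Nat.getLast_digit_ne_zero p hn
      have hfin : (⟨Nat.log p n, hi0⟩ : Fin (p.digits n).length) =
          ⟨(p.digits n).length - 1, by omega⟩ := by
        ext; simp; omega
      rw [hfin]
      intro hc
      apply hgl
      rw [List.getLast_eq_getElem]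
      simpa [List.get_eq_getElem] using hc
    have h3 := h2 ⟨0, Nat.pos_of_ne_zero hne⟩
    exact (ds_WT p _ j).mp h3
  · intro hj i
    rw [ds_pi_bot]
    intro _
    refine (ds_WT p _ j).mpr ?_
    have := i.isLt
    omega

/-- The faithful permutation representation of `SG p n` on `Fin n`. -/
noncomputable def SRho (p n : ℕ) [NeZero p] : SG p n →* Equiv.Perm (Fin n) := by
  refine (permMulEquiv (Fintype.equivFinOfCardEq ?_)).toMonoidHom.comp
    ((Equiv.Perm.sigmaCongrRightHom
      (fun i : Fin (p.digits n).length =>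
        Fin ((p.digits n).get i) × (Fin (i : ℕ) → ZMod p))).comp
      { toFun := fun F i => piPermHom (WRho p (i : ℕ)) (F i)
        map_one' := funext fun i => map_one _
        map_mul' := fun F G => funext fun i => map_mul _ _ _ })
  rw [Fintype.card_sigma]
  calc ∑ i : Fin (p.digits n).length,
        Fintype.card (Fin ((p.digits n).get i) × (Fin (i : ℕ) → ZMod p))
      = ∑ i : Fin (p.digits n).length, (p.digits n).get i * p ^ (i : ℕ) := by
        refine Finset.sum_congr rfl fun i _ => ?_
        rw [Fintype.card_prod, Fintype.card_fin, Fintype.card_fun, ZMod.card,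
          Fintype.card_fin]
    _ = n := by rw [sum_get_mul_pow, Nat.ofDigits_digits]

lemma SRho_injective (p n : ℕ) [NeZero p] : Injective (SRho p n) := by
  refine ((permMulEquiv _).injective).comp (Equiv.Perm.sigmaCongrRightHom_injective.comp ?_)
  intro F G h
  funext i a
  have h2 := congrFun h i
  exact congrFun (piPermHom_injective (WRho_injective p (i : ℕ)) h2) a


lemma derivedLength_congr {G₁ G₂ : Type*} [Group G₁] [Group G₂] (e : G₁ ≃* G₂) :
    derivedLength G₁ = derivedLength G₂ := by
  unfold derivedLength
  congr 1
  ext j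
  exact ds_bot_congr e j

end Stmt5Aux

/-- If `n` has `p`-adic expansion `n = a_0 + a_1 p + ⋯ + a_k p^k` with `a_k > 0`
(equivalently `k = ⌊log_p n⌋ = Nat.log p n`, and `k ≥ 1` since `p ≤ n`), then a Sylow
`p`-subgroup of the symmetric group `Sym_n` (which is a direct product of `a_i` copies of
the iterated wreath products `P_{p^i}`) has derived length exactly `k`. -/
theorem stmt5 {p n : ℕ} (hp : p.Prime) (hpn : p ≤ n)
    (P : Sylow p (Equiv.Perm (Fin n))) :
    derivedLength ↥(P : Subgroup (Equiv.Perm (Fin n))) = Nat.log p n := by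
  haveI : Fact p.Prime := ⟨hp⟩
  haveI : NeZero p := ⟨hp.ne_zero⟩
  have hn : n ≠ 0 := by have := hp.two_le; omega
  have hinj := Stmt5Aux.SRho_injective p n
  have hcard : Nat.card (Stmt5Aux.SRho p n).range =
      p ^ ((Nat.card (Equiv.Perm (Fin n))).factorization p) := by
    have h1 : Nat.card (Stmt5Aux.SRho p n).range = Nat.card (Stmt5Aux.SG p n) :=
      Nat.card_congr (Equiv.ofInjective _ hinj).symm
    rw [h1, Stmt5Aux.card_SG, Stmt5Aux.exp_eq]
    congr 1
    rw [Nat.card_eq_fintype_card, Fintype.card_perm, Fintype.card_fin,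
      Nat.factorization_def _ hp]
  let P' : Sylow p (Equiv.Perm (Fin n)) := Sylow.ofCard _ hcard
  obtain ⟨g, hg⟩ := MulAction.exists_smul_eq (Equiv.Perm (Fin n)) P' P
  have e1 : Stmt5Aux.SG p n ≃* ↥(P' : Subgroup (Equiv.Perm (Fin n))) :=
    MonoidHom.ofInjective hinj
  have e2 := P'.equivSMul g
  rw [hg] at e2
  have hP : derivedLength ↥(P : Subgroup (Equiv.Perm (Fin n))) =
      derivedLength (Stmt5Aux.SG p n) :=
    Stmt5Aux.derivedLength_congr ((e1.trans e2).symm)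
  rw [hP]
  unfold derivedLength
  have hset : {j | derivedSeries (Stmt5Aux.SG p n) j = ⊥} = Set.Ici (Nat.log p n) :=
    Set.ext fun j => Stmt5Aux.ds_SG_iff p n hn j
  rw [hset]
  exact csInf_Ici
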